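/- Let H be a Hilbert space (real or complex), A a positive operator on H, ε ∈ [0,1), and x, y ∈ H. Then |⟨x, y⟩_A| ≤ ε‖x‖_A‖y‖_A if and only if there exists z ∈ H such that ⟨x, z⟩_A = 0 and ‖z − y‖_A ≤ ε‖y‖_A. -/

import Mathlib

noncomputable section

/-- The seminorm induced by a positive operator `A`: `‖x‖_A = √(re ⟪A x, x⟫)`. -/
def anorm {𝕜 H : Type*} [RCLike 𝕜] [NormedAddCommGroup H] [InnerProductSpace 𝕜 H]
    (A : H →L[𝕜] H) (x : H) : ℝ :=
  Real.sqrt (RCLike.re (inner 𝕜 (A x) x))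

/-- The semi-inner product induced by `A`: `⟨x, y⟩_A = ⟪A x, y⟫`. -/
def ainner {𝕜 H : Type*} [RCLike 𝕜] [NormedAddCommGroup H] [InnerProductSpace 𝕜 H]
    (A : H →L[𝕜] H) (x y : H) : 𝕜 :=
  (inner 𝕜 (A x) y)

/-- `T` is `A`-bounded. -/
def IsABounded {𝕜 H : Type*} [RCLike 𝕜] [NormedAddCommGroup H] [InnerProductSpace 𝕜 H]
    (A T : H →L[𝕜] H) : Prop :=
  ∃ c > 0, ∀ x : H, anorm A (T x) ≤ c * anorm A x

/-- The `A`-norm of an operator `T`: `sup {‖Tx‖_A : ‖x‖_A = 1}`. -/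
def opAnorm {𝕜 H : Type*} [RCLike 𝕜] [NormedAddCommGroup H] [InnerProductSpace 𝕜 H]
    (A T : H →L[𝕜] H) : ℝ :=
  sSup {r : ℝ | ∃ x : H, anorm A x = 1 ∧ r = anorm A (T x)}

/-- `(ε,A)`-approximate orthogonality in the sense of Chmieliński, for vectors. -/
def VOrthEps {𝕜 H : Type*} [RCLike 𝕜] [NormedAddCommGroup H] [InnerProductSpace 𝕜 H]
    (A : H →L[𝕜] H) (ε : ℝ) (x y : H) : Prop :=
  ∀ l : 𝕜, anorm A x ^ 2 - 2 * ε * anorm A x * anorm A (l • y) ≤ anorm A (x + l • y) ^ 2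

/-- `(ε,A)`-approximate orthogonality in the sense of Chmieliński, for operators. -/
def OpOrthEps {𝕜 H : Type*} [RCLike 𝕜] [NormedAddCommGroup H] [InnerProductSpace 𝕜 H]
    (A T S : H →L[𝕜] H) (ε : ℝ) : Prop :=
  ∀ l : 𝕜, opAnorm A T ^ 2 - 2 * ε * opAnorm A T * opAnorm A (l • S) ≤ opAnorm A (T + l • S) ^ 2

end

section AuxLemmas

open RCLike

variable {𝕜 H : Type*} [RCLike 𝕜] [NormedAddCommGroup H] [InnerProductSpace 𝕜 H]

/-- The pre-inner-product core induced by a positive operator. -/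
noncomputable def acore [CompleteSpace H] (A : H →L[𝕜] H) (hA : A.IsPositive) :
    PreInnerProductSpace.Core 𝕜 H where
  inner x y := inner 𝕜 (A x) y
  conj_inner_symm x y := by
    show (starRingEnd 𝕜) (inner 𝕜 (A y) x : 𝕜) = inner 𝕜 (A x) y
    rw [inner_conj_symm]
    exact (hA.isSelfAdjoint.isSymmetric x y).symm
  re_inner_nonneg x := hA.2 x
  add_left x y z := by simp [inner_add_left]
  smul_left x y r := by simp [inner_smul_left]

lemma anorm_nonneg (A : H →L[𝕜] H) (x : H) : 0 ≤ anorm A x := Real.sqrt_nonneg _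

lemma anorm_smul (A : H →L[𝕜] H) (c : 𝕜) (x : H) : anorm A (c • x) = ‖c‖ * anorm A x := by
  unfold anorm
  rw [map_smul, inner_smul_left, inner_smul_right, ← mul_assoc, RCLike.conj_mul,
    ← RCLike.ofReal_pow, RCLike.re_ofReal_mul, Real.sqrt_mul (by positivity),
    Real.sqrt_sq (norm_nonneg _)]

lemma anorm_neg (A : H →L[𝕜] H) (x : H) : anorm A (-x) = anorm A x := by
  unfold anorm
  rw [map_neg, inner_neg_neg]

lemma anorm_cs [CompleteSpace H] (A : H →L[𝕜] H) (hA : A.IsPositive) (x y : H) :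
    ‖ainner A x y‖ ≤ anorm A x * anorm A y := by
  have h : ‖(inner 𝕜 (A x) y : 𝕜)‖ * ‖(inner 𝕜 (A y) x : 𝕜)‖
      ≤ re (inner 𝕜 (A x) x : 𝕜) * re (inner 𝕜 (A y) y : 𝕜) :=
    @InnerProductSpace.Core.inner_mul_inner_self_le 𝕜 H _ _ _ (acore A hA) x y
  have hsym : ‖(inner 𝕜 (A y) x : 𝕜)‖ = ‖(inner 𝕜 (A x) y : 𝕜)‖ := by
    rw [norm_inner_symm]
    exact congrArg norm (hA.isSelfAdjoint.isSymmetric x y).symm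
  calc ‖ainner A x y‖
      = Real.sqrt (‖(inner 𝕜 (A x) y : 𝕜)‖ * ‖(inner 𝕜 (A y) x : 𝕜)‖) := by
        rw [hsym, Real.sqrt_mul_self (norm_nonneg _)]; rfl
    _ ≤ Real.sqrt (re (inner 𝕜 (A x) x : 𝕜) * re (inner 𝕜 (A y) y : 𝕜)) := Real.sqrt_le_sqrt h
    _ = anorm A x * anorm A y := Real.sqrt_mul (hA.2 x) _

end AuxLemmas

/-- `|⟨x, y⟩_A| ≤ ε‖x‖_A‖y‖_A` iff there exists `z` with `⟨x, z⟩_A = 0` and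
`‖z − y‖_A ≤ ε‖y‖_A`. -/
theorem stmt_2 {𝕜 H : Type*} [RCLike 𝕜] [NormedAddCommGroup H] [InnerProductSpace 𝕜 H]
    [CompleteSpace H] (A : H →L[𝕜] H) (hA : A.IsPositive) (ε : ℝ) (hε0 : 0 ≤ ε) (hε1 : ε < 1)
    (x y : H) :
    ‖ainner A x y‖ ≤ ε * anorm A x * anorm A y ↔
      ∃ z : H, ainner A x z = 0 ∧ anorm A (z - y) ≤ ε * anorm A y := by
  constructor
  · intro h
    by_cases hx : anorm A x = 0
    · refine ⟨y, ?_, ?_⟩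
      · have h1 := anorm_cs A hA x y
        rw [hx, zero_mul] at h1
        exact norm_le_zero_iff.mp h1
      · rw [sub_self]
        have : anorm A (0 : H) = 0 := by simp [anorm]
        rw [this]
        exact mul_nonneg hε0 (anorm_nonneg A y)
    · have hn : 0 < anorm A x := (anorm_nonneg A x).lt_of_ne (Ne.symm hx)
      set t : 𝕜 := ainner A x y with ht
      set c : 𝕜 := t / ((anorm A x ^ 2 : ℝ) : 𝕜) with hc
      have h2 : anorm A x ^ 2 = RCLike.re (inner 𝕜 (A x) x : 𝕜) := by
        unfold anorm
        exact Real.sq_sqrt (show (0:ℝ) ≤ RCLike.re (inner 𝕜 (A x) x : 𝕜) from hA.2 x)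
      have hAxx : (inner 𝕜 (A x) x : 𝕜) = ((anorm A x ^ 2 : ℝ) : 𝕜) := by
        have hreal : (starRingEnd 𝕜) (inner 𝕜 (A x) x : 𝕜) = (inner 𝕜 (A x) x : 𝕜) := by
          rw [inner_conj_symm]
          exact (hA.isSelfAdjoint.isSymmetric x x).symm
        rw [h2]
        exact (RCLike.conj_eq_iff_re.mp hreal).symm
      have hn2 : ((anorm A x ^ 2 : ℝ) : 𝕜) ≠ 0 := by
        simp only [ne_eq, RCLike.ofReal_eq_zero]
        positivity
      refine ⟨y - c • x, ?_, ?_⟩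
      · show (inner 𝕜 (A x) (y - c • x) : 𝕜) = 0
        rw [inner_sub_right, inner_smul_right, hAxx, hc, div_mul_cancel₀ _ hn2]
        exact sub_eq_zero.mpr rfl
      · have heq : y - c • x - y = -(c • x) := by abel
        rw [heq, anorm_neg, anorm_smul]
        have hcnorm : ‖c‖ = ‖t‖ / anorm A x ^ 2 := by
          rw [hc, norm_div, RCLike.norm_ofReal, abs_of_nonneg (by positivity)]
        rw [hcnorm]
        rw [div_mul_eq_mul_div, sq]
        rw [div_le_iff₀ (by positivity)]
        calc ‖t‖ * anorm A x ≤ (ε * anorm A x * anorm A y) * anorm A x :=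
              mul_le_mul_of_nonneg_right h (anorm_nonneg A x)
          _ = ε * anorm A y * (anorm A x * anorm A x) := by ring
  · rintro ⟨z, hz, hle⟩
    have key : ainner A x y = ainner A x (y - z) := by
      have hz' : (inner 𝕜 (A x) z : 𝕜) = 0 := hz
      show (inner 𝕜 (A x) y : 𝕜) = inner 𝕜 (A x) (y - z)
      rw [inner_sub_right, hz', sub_zero]
    calc ‖ainner A x y‖ = ‖ainner A x (y - z)‖ := by rw [key]
      _ ≤ anorm A x * anorm A (y - z) := anorm_cs A hA x (y - z)
      _ = anorm A x * anorm A (z - y) := by rw [← anorm_neg A (z - y), neg_sub]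
      _ ≤ anorm A x * (ε * anorm A y) := mul_le_mul_of_nonneg_left hle (anorm_nonneg A x)
      _ = ε * anorm A x * anorm A y := by ring
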